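/- Let ℓ ≥ 2 be an even integer and suppose there exists a finite projective plane of order ℓ − 1 (an ℓ-uniform, ℓ-regular family ℒ of ℓ² − ℓ + 1 lines on ℓ² − ℓ + 1 points in which any two distinct lines meet in exactly one point and any two distinct points lie on exactly one common line). Then there exists an ℓ-semi-intersecting family with parameters n = ℓ − 1 and k = 1 of size (ℓ − 1)². -/
import Mathlib


/-- An `ℓ`-semi-intersecting family with parameters `n` and `k`: pairwise disjoint base
sets `A 0, …, A (ℓ-1)`, each of size `n`, and a family `𝒮` of subsets of their union such
that `|S ∩ A i| = k` for every `S ∈ 𝒮` and every `i`, and for distinct `S, T ∈ 𝒮` the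
number of indices `i` with `S ∩ T ∩ A i = ∅` is odd. -/
def IsSemiIntersecting {α : Type*} [DecidableEq α] (ℓ n k : ℕ)
    (A : Fin ℓ → Finset α) (𝒮 : Finset (Finset α)) : Prop :=
  (∀ i j, i ≠ j → Disjoint (A i) (A j)) ∧
  (∀ i, (A i).card = n) ∧
  (∀ S ∈ 𝒮, S ⊆ Finset.univ.biUnion A) ∧
  (∀ S ∈ 𝒮, ∀ i, (S ∩ A i).card = k) ∧
  (∀ S ∈ 𝒮, ∀ T ∈ 𝒮, S ≠ T →
    Odd ((Finset.univ.filter (fun i => S ∩ T ∩ A i = ∅)).card))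

/-- If `ℓ ≥ 2` is even and there exists a finite projective plane of order `ℓ − 1`
(an `ℓ`-uniform, `ℓ`-regular family of `ℓ² − ℓ + 1` lines on `ℓ² − ℓ + 1` points,
any two distinct lines meeting in exactly one point, any two distinct points on exactly
one common line), then there exists an `ℓ`-semi-intersecting family with parameters
`n = ℓ − 1` and `k = 1` of size `(ℓ − 1)²`. -/
theorem stmt_18 (ℓ : ℕ) (hℓ : 2 ≤ ℓ) (heven : Even ℓ)
    (P : Finset ℕ) (ℒ : Finset (Finset ℕ))
    (hP : P.card = ℓ ^ 2 - ℓ + 1)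
    (hLcard : ℒ.card = ℓ ^ 2 - ℓ + 1)
    (hsub : ∀ L ∈ ℒ, L ⊆ P)
    (hunif : ∀ L ∈ ℒ, L.card = ℓ)
    (hreg : ∀ p ∈ P, (ℒ.filter (fun L => p ∈ L)).card = ℓ)
    (hmeet : ∀ L ∈ ℒ, ∀ L' ∈ ℒ, L ≠ L' → (L ∩ L').card = 1)
    (hjoin : ∀ p ∈ P, ∀ q ∈ P, p ≠ q →
      (ℒ.filter (fun L => p ∈ L ∧ q ∈ L)).card = 1) :
    ∃ (A : Fin ℓ → Finset ℕ) (𝒮 : Finset (Finset ℕ)),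
      IsSemiIntersecting ℓ (ℓ - 1) 1 A 𝒮 ∧ 𝒮.card = (ℓ - 1) ^ 2 := by
  classical
  obtain ⟨q, rfl⟩ : ∃ q, ℓ = q + 1 := ⟨ℓ - 1, by omega⟩
  have hpow : (q+1)^2 - (q+1) + 1 = q^2 + q + 1 := by
    have h1 : (q+1)^2 = q^2 + 2*q + 1 := by ring
    omega
  obtain ⟨p, hp⟩ := Finset.card_pos.mp (show 0 < P.card by rw [hP]; omega)
  set Lp := ℒ.filter (fun L => p ∈ L) with hLpdef
  have hLpcard : Lp.card = q + 1 := hreg p hp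
  set e := (Finset.equivFinOfCardEq hLpcard).symm with he
  set A : Fin (q+1) → Finset ℕ := fun i => ((e i : Finset ℕ)).erase p with hA
  have heL : ∀ i, (e i : Finset ℕ) ∈ ℒ ∧ p ∈ (e i : Finset ℕ) := by
    intro i
    exact Finset.mem_filter.mp (e i).2
  have huniq : ∀ x ∈ P, x ≠ p → ∀ L ∈ ℒ, ∀ L' ∈ ℒ,
      x ∈ L → p ∈ L → x ∈ L' → p ∈ L' → L = L' := by
    intro x hx hxp L hL L' hL' h1 h2 h3 h4
    obtain ⟨L₀, hL₀⟩ := Finset.card_eq_one.mp (hjoin x hx p hp hxp)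
    have m1 : L ∈ ℒ.filter (fun L => x ∈ L ∧ p ∈ L) := Finset.mem_filter.mpr ⟨hL, h1, h2⟩
    have m2 : L' ∈ ℒ.filter (fun L => x ∈ L ∧ p ∈ L) := Finset.mem_filter.mpr ⟨hL', h3, h4⟩
    rw [hL₀, Finset.mem_singleton] at m1 m2
    rw [m1, m2]
  have hex : ∀ x ∈ P, x ≠ p → ∃ i, x ∈ (e i : Finset ℕ) := by
    intro x hx hxp
    obtain ⟨L₀, hL₀⟩ := Finset.card_eq_one.mp (hjoin x hx p hp hxp)
    have hm0 : L₀ ∈ ℒ.filter (fun L => x ∈ L ∧ p ∈ L) := hL₀ ▸ Finset.mem_singleton_self _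
    rw [Finset.mem_filter] at hm0
    have hm : L₀ ∈ Lp := by rw [hLpdef, Finset.mem_filter]; exact ⟨hm0.1, hm0.2.2⟩
    refine ⟨e.symm ⟨L₀, hm⟩, ?_⟩
    rw [Equiv.apply_symm_apply]
    exact hm0.2.1
  set 𝒮 := ℒ.filter (fun L => p ∉ L) with h𝒮
  have hSmem : ∀ S ∈ 𝒮, S ∈ ℒ ∧ p ∉ S := by
    intro S hS; rw [h𝒮, Finset.mem_filter] at hS; exact hS
  refine ⟨A, 𝒮, ⟨?_, ?_, ?_, ?_, ?_⟩, ?_⟩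
  · -- disjoint
    intro i j hij
    have hne : (e i : Finset ℕ) ≠ (e j : Finset ℕ) := by
      intro h; exact hij (e.injective (Subtype.ext h))
    obtain ⟨a, ha⟩ := Finset.card_eq_one.mp (hmeet _ (heL i).1 _ (heL j).1 hne)
    have hpa : p ∈ (e i : Finset ℕ) ∩ (e j : Finset ℕ) :=
      Finset.mem_inter.mpr ⟨(heL i).2, (heL j).2⟩
    rw [ha, Finset.mem_singleton] at hpa
    rw [Finset.disjoint_left]
    intro x hx1 hx2
    have hx1' := Finset.mem_erase.mp hx1
    have hx2' := Finset.mem_erase.mp hx2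
    have : x ∈ (e i : Finset ℕ) ∩ (e j : Finset ℕ) := Finset.mem_inter.mpr ⟨hx1'.2, hx2'.2⟩
    rw [ha, Finset.mem_singleton] at this
    exact hx1'.1 (this.trans hpa.symm)
  · -- card
    intro i
    rw [hA]
    simp only []
    rw [Finset.card_erase_of_mem (heL i).2, hunif _ (heL i).1]
  · -- subset of union
    intro S hS x hx
    obtain ⟨hSL, hpS⟩ := hSmem S hS
    have hxP : x ∈ P := hsub S hSL hx
    have hxp : x ≠ p := fun h => hpS (h ▸ hx)
    obtain ⟨i, hi⟩ := hex x hxP hxp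
    exact Finset.mem_biUnion.mpr ⟨i, Finset.mem_univ i, Finset.mem_erase.mpr ⟨hxp, hi⟩⟩
  · -- |S ∩ A i| = 1
    intro S hS i
    obtain ⟨hSL, hpS⟩ := hSmem S hS
    have hne : S ≠ (e i : Finset ℕ) := by
      intro h; exact hpS (h ▸ (heL i).2)
    have key : S ∩ A i = S ∩ (e i : Finset ℕ) := by
      ext x
      simp only [hA, Finset.mem_inter, Finset.mem_erase]
      constructor
      · rintro ⟨h1, _, h2⟩; exact ⟨h1, h2⟩
      · rintro ⟨h1, h2⟩; exact ⟨h1, fun h => hpS (h ▸ h1), h2⟩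
    rw [key]
    exact hmeet S hSL _ (heL i).1 hne
  · -- oddness
    intro S hS T hT hST
    obtain ⟨hSL, hpS⟩ := hSmem S hS
    obtain ⟨hTL, hpT⟩ := hSmem T hT
    obtain ⟨x, hx⟩ := Finset.card_eq_one.mp (hmeet S hSL T hTL hST)
    have hxS : x ∈ S := (Finset.mem_inter.mp (hx ▸ Finset.mem_singleton_self x)).1
    have hxP : x ∈ P := hsub S hSL hxS
    have hxp : x ≠ p := fun h => hpS (h ▸ hxS)
    obtain ⟨i₀, hi₀⟩ := hex x hxP hxp
    have key : ∀ i : Fin (q+1), S ∩ T ∩ A i = ∅ ↔ i ≠ i₀ := by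
      intro i
      rw [hx]
      constructor
      · intro h hii
        subst hii
        have : x ∈ ({x} : Finset ℕ) ∩ A i := by
          refine Finset.mem_inter.mpr ⟨Finset.mem_singleton_self x, ?_⟩
          exact Finset.mem_erase.mpr ⟨hxp, hi₀⟩
        rw [h] at this
        exact absurd this (Finset.notMem_empty x)
      · intro hii
        rw [Finset.eq_empty_iff_forall_notMem]
        intro y hy
        obtain ⟨hy1, hy2⟩ := Finset.mem_inter.mp hy
        rw [Finset.mem_singleton] at hy1
        rw [hy1] at hy2
        have hye := Finset.mem_erase.mp hy2
        have : (e i : Finset ℕ) = (e i₀ : Finset ℕ) :=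
          huniq x hxP hxp _ (heL i).1 _ (heL i₀).1 hye.2 (heL i).2 hi₀ (heL i₀).2
        exact hii (e.injective (Subtype.ext this))
    have hfil : Finset.univ.filter (fun i => S ∩ T ∩ A i = ∅) =
        Finset.univ.erase i₀ := by
      ext i
      simp only [Finset.mem_filter, Finset.mem_univ, true_and, Finset.mem_erase, and_true]
      rw [key i]
    rw [hfil, Finset.card_erase_of_mem (Finset.mem_univ i₀), Finset.card_univ,
      Fintype.card_fin]
    simp only [Nat.add_sub_cancel]
    rw [← Nat.not_even_iff_odd]
    intro hq
    rw [Nat.even_add_one] at heven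
    exact heven hq
  · -- cardinality
    have h1 := hreg p hp
    have hsplit := Finset.card_filter_add_card_filter_not
      (s := ℒ) (p := fun L => p ∈ L)
    have hq2 : (q+1)^2 = q^2 + 2*q + 1 := by ring
    rw [h𝒮]
    simp only [Nat.add_sub_cancel]
    omega
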